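/- Periodicity two of complex Clifford algebras, even case: for every natural number p, the complex Clifford algebra CliffordAlgebra Q^{2p}_ℂ of the sum-of-squares form on Fin (2p) → ℂ is isomorphic as a ℂ-algebra to the algebra of 2^p × 2^p complex matrices. -/

import Mathlib

set_option linter.unreachableTactic false
set_option linter.unusedTactic false
set_option linter.unnecessarySeqFocus false

/-- The complex quadratic form `Q^n_ℂ` on `Fin n → ℂ`, given by `z ↦ z₀² + ⋯ + z_{n-1}²`. -/
noncomputable def Qc (n : ℕ) : QuadraticForm ℂ (Fin n → ℂ) :=
  QuadraticMap.weightedSumSquares ℂ (fun _ : Fin n => (1 : ℂ))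

lemma Qc_apply (n : ℕ) (v : Fin n → ℂ) : Qc n v = ∑ i, v i * v i := by
  simp [Qc, QuadraticMap.weightedSumSquares_apply]

namespace Cliff2

noncomputable def a : CliffordAlgebra (Qc 2) := CliffordAlgebra.ι (Qc 2) (Pi.single 0 1)
noncomputable def b : CliffordAlgebra (Qc 2) := CliffordAlgebra.ι (Qc 2) (Pi.single 1 1)

lemma a_def : a = CliffordAlgebra.ι (Qc 2) (Pi.single 0 1) := rfl
lemma b_def : b = CliffordAlgebra.ι (Qc 2) (Pi.single 1 1) := rfl

lemma ha : a * a = 1 := by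
  rw [a, CliffordAlgebra.ι_sq_scalar]
  norm_num [Qc_apply, Fin.sum_univ_two, Pi.single_apply]

lemma hb : b * b = 1 := by
  rw [b, CliffordAlgebra.ι_sq_scalar]
  norm_num [Qc_apply, Fin.sum_univ_two, Pi.single_apply]

lemma hba : b * a = -(a * b) := by
  have h := CliffordAlgebra.ι_mul_ι_add_swap (Q := Qc 2) (Pi.single 0 1) (Pi.single 1 1)
  have hp : QuadraticMap.polar (Qc 2) (Pi.single 0 1) (Pi.single 1 1) = 0 := by
    norm_num [QuadraticMap.polar, Qc_apply, Fin.sum_univ_two, Pi.single_apply]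
  rw [hp, map_zero] at h
  rw [a, b]
  rw [eq_neg_iff_add_eq_zero, add_comm]
  exact h

lemma ι_eq (v : Fin 2 → ℂ) : CliffordAlgebra.ι (Qc 2) v = v 0 • a + v 1 • b := by
  rw [a, b, ← map_smul, ← map_smul, ← map_add]
  congr 1
  ext i
  fin_cases i <;> simp

end Cliff2

namespace Cliff2

noncomputable def sp : Fin 4 → CliffordAlgebra (Qc 2) := ![1, a, b, a * b]

lemma span_eq_top : Submodule.span ℂ (Set.range sp) = ⊤ := by
  rw [Submodule.eq_top_iff']
  intro x
  set S := Submodule.span ℂ (Set.range sp) with hS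
  have h1 : (1 : CliffordAlgebra (Qc 2)) ∈ S := Submodule.subset_span ⟨0, rfl⟩
  have hA : a ∈ S := Submodule.subset_span ⟨1, rfl⟩
  have hB : b ∈ S := Submodule.subset_span ⟨2, rfl⟩
  have hAB : a * b ∈ S := Submodule.subset_span ⟨3, rfl⟩
  induction x using CliffordAlgebra.induction with
  | algebraMap r =>
    have : algebraMap ℂ _ r = r • (1 : CliffordAlgebra (Qc 2)) := by
      rw [Algebra.smul_def, mul_one]
    rw [this]; exact S.smul_mem r h1
  | ι v => rw [ι_eq]; exact S.add_mem (S.smul_mem _ hA) (S.smul_mem _ hB)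
  | mul x y hx hy =>
    induction hx using Submodule.span_induction with
    | mem u hu =>
      induction hy using Submodule.span_induction with
      | mem w hw =>
        obtain ⟨i, rfl⟩ := hu
        obtain ⟨j, rfl⟩ := hw
        have e1 : a * (a * b) = b := by rw [← mul_assoc, ha, one_mul]
        have e2 : b * (a * b) = -a := by
          rw [← mul_assoc, hba, neg_mul, mul_assoc, hb, mul_one]
        have e3 : (a * b) * a = -b := by
          rw [mul_assoc, hba, mul_neg, ← mul_assoc, ha, one_mul]
        have e4 : (a * b) * b = a := by rw [mul_assoc, hb, mul_one]
        have e5 : (a * b) * (a * b) = -1 := by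
          rw [mul_assoc a b, e2, mul_neg, ha]
        fin_cases i <;> fin_cases j <;>
          simp [sp, ha, hb, hba, e1, e2, e3, e4, e5] <;>
          first
            | assumption
            | exact S.neg_mem hAB
            | exact S.neg_mem hA
            | exact S.neg_mem hB
            | exact S.neg_mem h1
      | zero => rw [mul_zero]; exact S.zero_mem
      | add w₁ w₂ _ _ h₁ h₂ => rw [mul_add]; exact S.add_mem h₁ h₂
      | smul c w _ h => rw [mul_smul_comm]; exact S.smul_mem c h
    | zero => rw [zero_mul]; exact S.zero_mem
    | add x₁ x₂ _ _ h₁ h₂ => rw [add_mul]; exact S.add_mem h₁ h₂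
    | smul c w _ h => rw [smul_mul_assoc]; exact S.smul_mem c h
  | add x y hx hy => exact S.add_mem hx hy

end Cliff2

namespace Cliff2
open Matrix Complex

noncomputable def f0 : (Fin 2 → ℂ) →ₗ[ℂ] Matrix (Fin 2) (Fin 2) ℂ where
  toFun v := !![0, v 0 + I * v 1; v 0 - I * v 1, 0]
  map_add' v w := by
    ext i j; fin_cases i <;> fin_cases j <;> simp <;> ring
  map_smul' c v := by
    ext i j; fin_cases i <;> fin_cases j <;> simp <;> ring

lemma f0_cond (v : Fin 2 → ℂ) :
    f0 v * f0 v = algebraMap ℂ (Matrix (Fin 2) (Fin 2) ℂ) (Qc 2 v) := by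
  have : Qc 2 v = v 0 * v 0 + v 1 * v 1 := by
    rw [Qc_apply, Fin.sum_univ_two]
  rw [this, f0]
  ext i j
  fin_cases i <;> fin_cases j <;>
    simp [Matrix.mul_apply, Fin.sum_univ_two, Matrix.algebraMap_matrix_apply] <;> ring_nf
  · rw [Complex.I_sq]; ring
  · rw [Complex.I_sq]; ring

noncomputable def φ : CliffordAlgebra (Qc 2) →ₐ[ℂ] Matrix (Fin 2) (Fin 2) ℂ :=
  CliffordAlgebra.lift (Qc 2) ⟨f0, f0_cond⟩

lemma φ_a : φ a = !![0, 1; 1, 0] := by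
  rw [φ, a, CliffordAlgebra.lift_ι_apply]
  simp [f0]
lemma φ_b : φ b = !![0, I; -I, 0] := by
  rw [φ, b, CliffordAlgebra.lift_ι_apply]
  simp [f0]

end Cliff2

namespace Cliff2
open Matrix Complex

lemma φ_surj : Function.Surjective φ := by
  have hX : !![(0:ℂ), 1; 1, 0] ∈ φ.range := ⟨a, φ_a⟩
  have hY : !![(0:ℂ), I; -I, 0] ∈ φ.range := ⟨b, φ_b⟩
  have hZ : !![(1:ℂ), 0; 0, -1] ∈ φ.range := by
    have := φ.range.smul_mem (φ.range.mul_mem hX hY) I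
    convert this using 1
    ext i j
    fin_cases i <;> fin_cases j <;> simp [Matrix.mul_apply, Fin.sum_univ_two]
  have hE00 : !![(1:ℂ), 0; 0, 0] ∈ φ.range := by
    have := φ.range.smul_mem (φ.range.add_mem (φ.range.one_mem) hZ) (1/2 : ℂ)
    convert this using 1
    ext i j
    fin_cases i <;> fin_cases j <;> simp [Matrix.one_apply] <;> norm_num
  have hE11 : !![(0:ℂ), 0; 0, 1] ∈ φ.range := by
    have := φ.range.smul_mem (φ.range.add_mem (φ.range.one_mem)
      (φ.range.smul_mem hZ (-1))) (1/2 : ℂ)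
    convert this using 1
    ext i j
    fin_cases i <;> fin_cases j <;> simp [Matrix.one_apply] <;> norm_num
  have hE01 : !![(0:ℂ), 1; 0, 0] ∈ φ.range := by
    have := φ.range.mul_mem hE00 hX
    convert this using 1
    ext i j
    fin_cases i <;> fin_cases j <;> simp [Matrix.mul_apply, Fin.sum_univ_two]
  have hE10 : !![(0:ℂ), 0; 1, 0] ∈ φ.range := by
    have := φ.range.mul_mem hX hE00
    convert this using 1
    ext i j
    fin_cases i <;> fin_cases j <;> simp [Matrix.mul_apply, Fin.sum_univ_two]
  intro M
  have hM : M = M 0 0 • !![(1:ℂ), 0; 0, 0] + M 0 1 • !![(0:ℂ), 1; 0, 0]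
      + M 1 0 • !![(0:ℂ), 0; 1, 0] + M 1 1 • !![(0:ℂ), 0; 0, 1] := by
    ext i j
    fin_cases i <;> fin_cases j <;> simp
  have : M ∈ φ.range := by
    rw [hM]
    exact φ.range.add_mem (φ.range.add_mem (φ.range.add_mem
      (φ.range.smul_mem hE00 _) (φ.range.smul_mem hE01 _))
      (φ.range.smul_mem hE10 _)) (φ.range.smul_mem hE11 _)
  exact this

instance : Module.Finite ℂ (CliffordAlgebra (Qc 2)) :=
  ⟨⟨(Set.finite_range sp).toFinset, by
    rw [Set.Finite.coe_toFinset]; exact span_eq_top⟩⟩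

lemma finrank_le : Module.finrank ℂ (CliffordAlgebra (Qc 2)) ≤ 4 := by
  classical
  have h := finrank_span_le_card (R := ℂ) (Set.range sp)
  rw [span_eq_top, finrank_top] at h
  refine h.trans ?_
  have : (Set.range sp).toFinset.card ≤ Fintype.card (Fin 4) :=
    (Set.toFinset_range sp ▸ Finset.card_image_le).trans (by simp)
  simpa using this

lemma φ_inj : Function.Injective φ := by
  show Function.Injective φ.toLinearMap
  rw [← LinearMap.ker_eq_bot]
  have h1 := LinearMap.finrank_range_add_finrank_ker (φ.toLinearMap)
  have h2 : LinearMap.range φ.toLinearMap = ⊤ := by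
    rw [LinearMap.range_eq_top]; exact φ_surj
  rw [h2, finrank_top] at h1
  have h3 : Module.finrank ℂ (Matrix (Fin 2) (Fin 2) ℂ) = 4 := by
    rw [Module.finrank_matrix]; simp
  rw [h3] at h1
  have h5 := finrank_le
  have h4 : Module.finrank ℂ (LinearMap.ker φ.toLinearMap) = 0 := by omega
  rw [Submodule.finrank_eq_zero] at h4
  exact h4

noncomputable def equivMatrix : CliffordAlgebra (Qc 2) ≃ₐ[ℂ] Matrix (Fin 2) (Fin 2) ℂ :=
  AlgEquiv.ofBijective φ ⟨φ_inj, φ_surj⟩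

end Cliff2

namespace CliffTensor
open Cliff2 TensorProduct

variable {M₁ : Type*} [AddCommGroup M₁] [Module ℂ M₁] (Q₁ : QuadraticForm ℂ M₁)

noncomputable def ω : CliffordAlgebra (Qc 2) := Complex.I • (a * b)

lemma ω_def : ω = Complex.I • (a * b) := rfl

lemma ω_sq : ω * ω = 1 := by
  rw [ω, smul_mul_smul_comm]
  have habab : (a * b) * (a * b) = -1 := by
    have h1 : b * (a * b) = -a := by
      rw [← mul_assoc, hba, neg_mul, mul_assoc, hb, mul_one]
    rw [mul_assoc a b, h1, mul_neg, ha]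
  rw [habab, Complex.I_mul_I]
  simp

lemma mul1 : a * (a * b) = b := by rw [← mul_assoc, ha, one_mul]
lemma mul2 : b * (a * b) = -a := by
  rw [← mul_assoc, hba, neg_mul, mul_assoc, hb, mul_one]
lemma mul3 : (a * b) * a = -b := by
  rw [mul_assoc, hba, mul_neg, ← mul_assoc, ha, one_mul]
lemma mul4 : (a * b) * b = a := by rw [mul_assoc, hb, mul_one]

lemma a_ω : a * ω = -(ω * a) := by
  rw [ω, mul_smul_comm, smul_mul_assoc, mul1, mul3]
  simp

lemma b_ω : b * ω = -(ω * b) := by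
  rw [ω, mul_smul_comm, smul_mul_assoc, mul2, mul4]
  simp

lemma ιv_ω (v : Fin 2 → ℂ) :
    CliffordAlgebra.ι (Qc 2) v * ω = -(ω * CliffordAlgebra.ι (Qc 2) v) := by
  rw [ι_eq, add_mul, mul_add, smul_mul_assoc, smul_mul_assoc, a_ω, b_ω,
    mul_smul_comm, mul_smul_comm]
  simp only [smul_neg]
  abel

noncomputable def F : (M₁ × (Fin 2 → ℂ)) →ₗ[ℂ]
    (CliffordAlgebra Q₁ ⊗[ℂ] CliffordAlgebra (Qc 2)) where
  toFun x := CliffordAlgebra.ι Q₁ x.1 ⊗ₜ ω + 1 ⊗ₜ CliffordAlgebra.ι (Qc 2) x.2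
  map_add' x y := by
    simp only [Prod.fst_add, Prod.snd_add, map_add, add_tmul, tmul_add]
    abel
  map_smul' c x := by
    simp only [Prod.smul_fst, Prod.smul_snd, map_smul, RingHom.id_apply, smul_add,
      smul_tmul', tmul_smul]

lemma F_cond (x : M₁ × (Fin 2 → ℂ)) :
    F Q₁ x * F Q₁ x = algebraMap ℂ _ ((Q₁.prod (Qc 2)) x) := by
  obtain ⟨m, v⟩ := x
  simp only [F, LinearMap.coe_mk, AddHom.coe_mk]
  rw [add_mul, mul_add, mul_add, Algebra.TensorProduct.tmul_mul_tmul,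
    Algebra.TensorProduct.tmul_mul_tmul, Algebra.TensorProduct.tmul_mul_tmul,
    Algebra.TensorProduct.tmul_mul_tmul, CliffordAlgebra.ι_sq_scalar,
    CliffordAlgebra.ι_sq_scalar, ω_sq, one_mul, mul_one, one_mul, ιv_ω,
    QuadraticMap.prod_apply, map_add]
  have h1 : (algebraMap ℂ (CliffordAlgebra Q₁) (Q₁ m)) ⊗ₜ[ℂ] (1 : CliffordAlgebra (Qc 2))
      = algebraMap ℂ _ (Q₁ m) := by
    rw [Algebra.TensorProduct.algebraMap_apply]
  have h2 : (1 : CliffordAlgebra Q₁) ⊗ₜ[ℂ] (algebraMap ℂ (CliffordAlgebra (Qc 2)) (Qc 2 v))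
      = algebraMap ℂ _ (Qc 2 v) := by
    rw [← Algebra.TensorProduct.includeRight_apply,
      Algebra.TensorProduct.includeRight.commutes]
  rw [h1, h2, tmul_neg]
  abel

noncomputable def Φ : CliffordAlgebra (Q₁.prod (Qc 2)) →ₐ[ℂ]
    (CliffordAlgebra Q₁ ⊗[ℂ] CliffordAlgebra (Qc 2)) :=
  CliffordAlgebra.lift _ ⟨F Q₁, F_cond Q₁⟩

lemma Φ_ι (x : M₁ × (Fin 2 → ℂ)) :
    Φ Q₁ (CliffordAlgebra.ι _ x) =
      CliffordAlgebra.ι Q₁ x.1 ⊗ₜ ω + 1 ⊗ₜ CliffordAlgebra.ι (Qc 2) x.2 := by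
  rw [Φ, CliffordAlgebra.lift_ι_apply]; rfl

end CliffTensor

namespace CliffTensor
open Cliff2 TensorProduct

variable {M₁ : Type*} [AddCommGroup M₁] [Module ℂ M₁] (Q₁ : QuadraticForm ℂ M₁)

noncomputable def g : CliffordAlgebra (Qc 2) →ₐ[ℂ] CliffordAlgebra (Q₁.prod (Qc 2)) :=
  CliffordAlgebra.map (QuadraticMap.Isometry.inr Q₁ (Qc 2))

lemma g_ι (v : Fin 2 → ℂ) :
    g Q₁ (CliffordAlgebra.ι _ v) = CliffordAlgebra.ι (Q₁.prod (Qc 2)) (0, v) :=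
  CliffordAlgebra.map_apply_ι _ _

/-- Anticommutation for orthogonal vectors in the product. -/
lemma anticomm {x y : M₁ × (Fin 2 → ℂ)}
    (h : QuadraticMap.polar (Q₁.prod (Qc 2)) x y = 0) :
    CliffordAlgebra.ι (Q₁.prod (Qc 2)) x * CliffordAlgebra.ι _ y
      = -(CliffordAlgebra.ι _ y * CliffordAlgebra.ι _ x) := by
  have := CliffordAlgebra.ι_mul_ι_add_swap (Q := Q₁.prod (Qc 2)) x y
  rw [h, map_zero] at this
  rw [eq_neg_iff_add_eq_zero]
  exact this

lemma polar_ml_zero (m : M₁) (v : Fin 2 → ℂ) :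
    QuadraticMap.polar (Q₁.prod (Qc 2)) (m, 0) (0, v) = 0 := by
  rw [QuadraticMap.polar_prod]
  simp

-- `u m` anticommutes with `ι (0, v)`
lemma u_anticomm (m : M₁) (v : Fin 2 → ℂ) :
    CliffordAlgebra.ι (Q₁.prod (Qc 2)) (m, 0) * CliffordAlgebra.ι _ (0, v)
      = -(CliffordAlgebra.ι _ (0, v) * CliffordAlgebra.ι _ (m, 0)) :=
  anticomm Q₁ (polar_ml_zero Q₁ m v)

lemma gω_eq : g Q₁ ω = Complex.I • (g Q₁ a * g Q₁ b) := by
  rw [ω, map_smul, map_mul]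

lemma gω_anticomm (v : Fin 2 → ℂ) :
    CliffordAlgebra.ι (Q₁.prod (Qc 2)) (0, v) * g Q₁ ω
      = -(g Q₁ ω * CliffordAlgebra.ι (Q₁.prod (Qc 2)) (0, v)) := by
  rw [← g_ι, ← map_mul, ← map_mul, ιv_ω, map_neg]

lemma gω_sq : g Q₁ ω * g Q₁ ω = 1 := by rw [← map_mul, ω_sq, map_one]

lemma u_comm_gω (m : M₁) :
    CliffordAlgebra.ι (Q₁.prod (Qc 2)) (m, 0) * g Q₁ ω
      = g Q₁ ω * CliffordAlgebra.ι (Q₁.prod (Qc 2)) (m, 0) := by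
  rw [gω_eq, a_def, b_def, g_ι, g_ι, mul_smul_comm, smul_mul_assoc]
  congr 1
  -- u * (c * d) = (c * d) * u  where u anticommutes with c and d
  rw [← mul_assoc, u_anticomm Q₁ m (Pi.single 0 1), neg_mul, mul_assoc,
    u_anticomm Q₁ m (Pi.single 1 1), mul_neg, neg_neg, mul_assoc]

noncomputable def f0' : M₁ →ₗ[ℂ] CliffordAlgebra (Q₁.prod (Qc 2)) :=
  (LinearMap.mulRight ℂ (g Q₁ ω)).comp
    ((CliffordAlgebra.ι (Q₁.prod (Qc 2))).comp (LinearMap.inl ℂ M₁ (Fin 2 → ℂ)))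

lemma f0'_apply (m : M₁) :
    f0' Q₁ m = CliffordAlgebra.ι (Q₁.prod (Qc 2)) (m, 0) * g Q₁ ω := rfl

lemma f0'_cond (m : M₁) : f0' Q₁ m * f0' Q₁ m = algebraMap ℂ _ (Q₁ m) := by
  rw [f0'_apply]
  set u := CliffordAlgebra.ι (Q₁.prod (Qc 2)) (m, 0) with hu
  set W := g Q₁ ω with hW
  calc (u * W) * (u * W) = u * ((W * u) * W) := by rw [mul_assoc, mul_assoc]
    _ = u * ((u * W) * W) := by rw [← u_comm_gω]
    _ = u * (u * (W * W)) := by rw [mul_assoc]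
    _ = u * u := by rw [hW, gω_sq, mul_one]
    _ = algebraMap ℂ _ (Q₁ m) := by
        rw [hu, CliffordAlgebra.ι_sq_scalar, QuadraticMap.prod_apply]
        simp

noncomputable def f : CliffordAlgebra Q₁ →ₐ[ℂ] CliffordAlgebra (Q₁.prod (Qc 2)) :=
  CliffordAlgebra.lift _ ⟨f0' Q₁, f0'_cond Q₁⟩

lemma f_ι (m : M₁) :
    f Q₁ (CliffordAlgebra.ι _ m)
      = CliffordAlgebra.ι (Q₁.prod (Qc 2)) (m, 0) * g Q₁ ω := by
  rw [f, CliffordAlgebra.lift_ι_apply, f0'_apply]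

lemma comm_fg (x : CliffordAlgebra Q₁) (y : CliffordAlgebra (Qc 2)) :
    Commute (f Q₁ x) (g Q₁ y) := by
  induction y using CliffordAlgebra.induction with
  | algebraMap r => rw [AlgHom.commutes]; exact Algebra.commute_algebraMap_right r _
  | mul y₁ y₂ h₁ h₂ => rw [map_mul]; exact h₁.mul_right h₂
  | add y₁ y₂ h₁ h₂ => rw [map_add]; exact h₁.add_right h₂
  | ι v =>
    rw [g_ι]
    induction x using CliffordAlgebra.induction with
    | algebraMap r => rw [AlgHom.commutes]; exact Algebra.commute_algebraMap_left r _
    | mul x₁ x₂ h₁ h₂ => rw [map_mul]; exact h₁.mul_left h₂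
    | add x₁ x₂ h₁ h₂ => rw [map_add]; exact h₁.add_left h₂
    | ι m =>
      rw [f_ι]
      unfold Commute SemiconjBy
      set u := CliffordAlgebra.ι (Q₁.prod (Qc 2)) (m, 0) with hu
      set W := g Q₁ ω with hW
      set e := CliffordAlgebra.ι (Q₁.prod (Qc 2)) (0, v) with he
      have h1 : W * e = -(e * W) := by rw [hW, he, gω_anticomm, neg_neg]
      have h2 : e * u = -(u * e) := by rw [hu, he, u_anticomm, neg_neg]
      calc (u * W) * e = u * (W * e) := by rw [mul_assoc]
        _ = -((u * e) * W) := by rw [h1, mul_neg, mul_assoc]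
        _ = (e * u) * W := by rw [h2]; simp
        _ = e * (u * W) := by rw [mul_assoc]

noncomputable def Ψ : (CliffordAlgebra Q₁ ⊗[ℂ] CliffordAlgebra (Qc 2)) →ₐ[ℂ]
    CliffordAlgebra (Q₁.prod (Qc 2)) :=
  Algebra.TensorProduct.lift (f Q₁) (g Q₁) (comm_fg Q₁)

noncomputable def tensorEquiv :
    CliffordAlgebra (Q₁.prod (Qc 2)) ≃ₐ[ℂ]
      (CliffordAlgebra Q₁ ⊗[ℂ] CliffordAlgebra (Qc 2)) := by
  refine AlgEquiv.ofAlgHom (Φ Q₁) (Ψ Q₁) ?_ ?_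
  · -- Φ ∘ Ψ = id
    apply Algebra.TensorProduct.ext
    · apply CliffordAlgebra.hom_ext
      apply LinearMap.ext
      intro m
      simp only [AlgHom.comp_toLinearMap, LinearMap.coe_comp, Function.comp_apply,
        AlgHom.toLinearMap_apply, AlgHom.coe_comp]
      rw [Algebra.TensorProduct.includeLeft_apply]
      have hΨ : (Ψ Q₁) ((CliffordAlgebra.ι Q₁ m) ⊗ₜ[ℂ] (1 : CliffordAlgebra (Qc 2)))
          = f Q₁ (CliffordAlgebra.ι Q₁ m) := by
        rw [Ψ, Algebra.TensorProduct.lift_tmul, map_one, mul_one]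
      rw [hΨ, f_ι, map_mul]
      have h1 : (Φ Q₁) (CliffordAlgebra.ι (Q₁.prod (Qc 2)) (m, 0))
          = CliffordAlgebra.ι Q₁ m ⊗ₜ ω := by
        rw [Φ_ι]; simp
      have h2 : (Φ Q₁) (g Q₁ ω) = 1 ⊗ₜ ω := by
        rw [gω_eq, map_smul, map_mul, a_def, b_def, g_ι, g_ι, Φ_ι, Φ_ι]
        simp only [map_zero, TensorProduct.zero_tmul, zero_add]
        rw [Algebra.TensorProduct.tmul_mul_tmul, one_mul, ω_def, tmul_smul, a_def, b_def]
      rw [h1, h2, Algebra.TensorProduct.tmul_mul_tmul, mul_one, ω_sq]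
      rfl
    · apply CliffordAlgebra.hom_ext
      apply LinearMap.ext
      intro v
      simp only [AlgHom.comp_toLinearMap, LinearMap.coe_comp, Function.comp_apply,
        AlgHom.toLinearMap_apply, AlgHom.coe_comp, AlgHom.coe_restrictScalars']
      rw [Algebra.TensorProduct.includeRight_apply]
      have hΨ : (Ψ Q₁) ((1 : CliffordAlgebra Q₁) ⊗ₜ[ℂ] CliffordAlgebra.ι (Qc 2) v)
          = g Q₁ (CliffordAlgebra.ι _ v) := by
        rw [Ψ, Algebra.TensorProduct.lift_tmul, map_one, one_mul]
      rw [hΨ, g_ι, Φ_ι]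
      simp
  · -- Ψ ∘ Φ = id
    apply CliffordAlgebra.hom_ext
    apply LinearMap.ext
    intro x
    obtain ⟨m, v⟩ := x
    simp only [AlgHom.comp_toLinearMap, LinearMap.coe_comp, Function.comp_apply,
      AlgHom.toLinearMap_apply, AlgHom.coe_comp, AlgHom.coe_id, id_eq]
    rw [Φ_ι, map_add]
    have h1 : (Ψ Q₁) ((CliffordAlgebra.ι Q₁ m) ⊗ₜ[ℂ] ω)
        = CliffordAlgebra.ι (Q₁.prod (Qc 2)) (m, 0) := by
      rw [Ψ, Algebra.TensorProduct.lift_tmul, f_ι, mul_assoc, gω_sq, mul_one]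
    have h2 : (Ψ Q₁) ((1 : CliffordAlgebra Q₁) ⊗ₜ[ℂ] CliffordAlgebra.ι (Qc 2) v)
        = CliffordAlgebra.ι (Q₁.prod (Qc 2)) (0, v) := by
      rw [Ψ, Algebra.TensorProduct.lift_tmul, map_one, one_mul, g_ι]
    show (Ψ Q₁) ((CliffordAlgebra.ι Q₁ (m, v).1) ⊗ₜ[ℂ] ω)
        + (Ψ Q₁) ((1 : CliffordAlgebra Q₁) ⊗ₜ[ℂ] CliffordAlgebra.ι (Qc 2) (m, v).2)
      = CliffordAlgebra.ι _ (m, v)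
    rw [h1, h2, ← map_add]
    congr 1
    exact Prod.ext (by simp) (by simp)

end CliffTensor

section Assembly
open scoped TensorProduct

noncomputable def QcProdEquiv (n m : ℕ) :
    (Qc (n + m)).IsometryEquiv ((Qc n).prod (Qc m)) where
  toLinearEquiv := (LinearEquiv.funCongrLeft ℂ ℂ finSumFinEquiv).trans
      (LinearEquiv.sumArrowLequivProdArrow _ _ ℂ ℂ)
  map_app' v := by
    simp only [QuadraticMap.prod_apply, Qc_apply, LinearEquiv.trans_apply]
    rw [← Equiv.sum_comp finSumFinEquiv (fun i => v i * v i), Fintype.sum_sum_type]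
    rfl

/-- Cast between `Qc n` for equal `n`. -/
noncomputable def QcCast {n m : ℕ} (h : n = m) : (Qc n).IsometryEquiv (Qc m) := by
  subst h; exact QuadraticMap.IsometryEquiv.refl _

noncomputable def evalOne : Matrix (Fin 1) (Fin 1) ℂ →ₐ[ℂ] ℂ where
  toFun M := M 0 0
  map_one' := by simp [Matrix.one_apply]
  map_mul' M N := by simp [Matrix.mul_apply]
  map_zero' := rfl
  map_add' M N := rfl
  commutes' c := by simp [Matrix.algebraMap_matrix_apply]

noncomputable def oneByOne : ℂ ≃ₐ[ℂ] Matrix (Fin 1) (Fin 1) ℂ := by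
  refine AlgEquiv.ofAlgHom (Algebra.ofId ℂ _) evalOne ?_ (Subsingleton.elim _ _)
  ext M i j
  fin_cases i <;> fin_cases j <;>
    simp [evalOne, Algebra.ofId_apply, Matrix.algebraMap_matrix_apply] <;> rfl

noncomputable def cliffZero : CliffordAlgebra (Qc 0) ≃ₐ[ℂ] ℂ := by
  refine AlgEquiv.ofAlgHom
    (CliffordAlgebra.lift (Qc 0) ⟨0, fun m => by simp [Qc_apply]⟩)
    (Algebra.ofId ℂ _) (Subsingleton.elim _ _) ?_
  apply CliffordAlgebra.hom_ext
  apply LinearMap.ext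
  intro m
  have h0 : CliffordAlgebra.ι (Qc 0) m = 0 := by
    rw [show m = 0 from Subsingleton.elim _ _, map_zero]
  simp only [AlgHom.comp_toLinearMap, LinearMap.coe_comp, Function.comp_apply,
    AlgHom.toLinearMap_apply, AlgHom.coe_comp, AlgHom.coe_id, id_eq]
  rw [h0, map_zero, map_zero]

/-- Periodicity two of complex Clifford algebras, even case:
`C̄^{2p} ≅ M_{2^p}(ℂ)` as `ℂ`-algebras. -/
theorem complex_clifford_even (p : ℕ) :
    Nonempty (CliffordAlgebra (Qc (2 * p)) ≃ₐ[ℂ]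
      Matrix (Fin (2 ^ p)) (Fin (2 ^ p)) ℂ) := by
  induction p with
  | zero =>
    exact ⟨(CliffordAlgebra.equivOfIsometry (QcCast (by norm_num))).trans
      (cliffZero.trans oneByOne)⟩
  | succ p ih =>
    obtain ⟨e⟩ := ih
    refine ⟨?_⟩
    have e1 : CliffordAlgebra (Qc (2 * (p + 1))) ≃ₐ[ℂ]
        CliffordAlgebra ((Qc (2 * p)).prod (Qc 2)) :=
      (CliffordAlgebra.equivOfIsometry (QcCast (by ring))).trans
        (CliffordAlgebra.equivOfIsometry (QcProdEquiv (2 * p) 2))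
    have e3 := CliffTensor.tensorEquiv (Qc (2 * p))
    have e4 := Algebra.TensorProduct.congr e Cliff2.equivMatrix
    have e5 := (matrixEquivTensor (Fin 2) ℂ (Matrix (Fin (2 ^ p)) (Fin (2 ^ p)) ℂ)).symm
    have e6 := Matrix.compAlgEquiv (Fin 2) (Fin (2 ^ p)) ℂ ℂ
    have e7 : Matrix (Fin 2 × Fin (2 ^ p)) (Fin 2 × Fin (2 ^ p)) ℂ ≃ₐ[ℂ]
        Matrix (Fin (2 ^ (p + 1))) (Fin (2 ^ (p + 1))) ℂ :=
      Matrix.reindexAlgEquiv ℂ ℂ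
        ((finProdFinEquiv : Fin 2 × Fin (2 ^ p) ≃ Fin (2 * 2 ^ p)).trans
          (finCongr (by rw [pow_succ]; ring)))
    exact e1.trans (e3.trans (e4.trans (e5.trans (e6.trans e7))))

end Assembly
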